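/- One-step inequality for the optimistic gradient descent-ascent (OGDA) iteration: let F : ℝ^d → ℝ^d be L-Lipschitz, let 0 < η ≤ 1/(2L), let u_0 = u_{−1} ∈ ℝ^d, and define u_{k+1} := u_k − ηF(u_k) − η(F(u_k) − F(u_{k−1})) for k ≥ 0. Then for every k ≥ 0 and every u ∈ ℝ^d: ⟨F(u_{k+1}), u_{k+1} − u⟩ ≤ ⟨F(u_{k+1}) − F(u_k), u_{k+1} − u⟩ − ⟨F(u_k) − F(u_{k−1}), u_k − u⟩ + (1/(2η))‖u − u_k‖² − (1/(2η))‖u − u_{k+1}‖² + (L/2)‖u_k − u_{k−1}‖² − (L/2)‖u_{k+1} − u_k‖². -/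

import Mathlib

set_option maxHeartbeats 1000000

open scoped RealInnerProductSpace

/-- **One-step inequality for the optimistic gradient descent-ascent (OGDA) iteration.** -/
theorem ogda_one_step {d : ℕ} (L η : ℝ) (hL : 0 < L)
    (F : EuclideanSpace ℝ (Fin d) → EuclideanSpace ℝ (Fin d))
    (hF : ∀ u v, ‖F u - F v‖ ≤ L * ‖u - v‖)
    (hη : 0 < η) (hη' : η ≤ 1 / (2 * L))
    (u : ℤ → EuclideanSpace ℝ (Fin d))
    (hinit : u 0 = u (-1))
    (hupd : ∀ k : ℤ, 0 ≤ k →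
      u (k + 1) = u k - η • F (u k) - η • (F (u k) - F (u (k - 1))))
    (k : ℤ) (hk : 0 ≤ k) (x : EuclideanSpace ℝ (Fin d)) :
    ⟪F (u (k + 1)), u (k + 1) - x⟫
      ≤ ⟪F (u (k + 1)) - F (u k), u (k + 1) - x⟫
        - ⟪F (u k) - F (u (k - 1)), u k - x⟫
        + 1 / (2 * η) * ‖x - u k‖ ^ 2 - 1 / (2 * η) * ‖x - u (k + 1)‖ ^ 2
        + L / 2 * ‖u k - u (k - 1)‖ ^ 2 - L / 2 * ‖u (k + 1) - u k‖ ^ 2 := by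
  set a := u k with ha
  set b := u (k + 1) with hb
  set c := u (k - 1) with hc
  have hupdk : b = a - η • F a - η • (F a - F c) := hupd k hk
  have hab : a - b = η • (F a + (F a - F c)) := by
    rw [hupdk]; module
  have hsum : F a + (F a - F c) = η⁻¹ • (a - b) := by
    rw [hab, smul_smul, inv_mul_cancel₀ hη.ne', one_smul]
  -- key inner product decomposition
  have hinner : ⟪F a + (F a - F c), b - x⟫ = η⁻¹ * ⟪a - b, b - x⟫ := by
    rw [hsum, real_inner_smul_left]
  have hkey : ⟪F b, b - x⟫
      = ⟪F b - F a, b - x⟫ - ⟪F a - F c, a - x⟫ + ⟪F a - F c, a - b⟫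
        + η⁻¹ * ⟪a - b, b - x⟫ := by
    have e1 : ⟪F b - F a, b - x⟫ = ⟪F b, b - x⟫ - ⟪F a, b - x⟫ :=
      inner_sub_left _ _ _
    have e2 : ⟪F a + (F a - F c), b - x⟫ = ⟪F a, b - x⟫ + ⟪F a - F c, b - x⟫ :=
      inner_add_left _ _ _
    have e3 : ⟪F a - F c, a - x⟫ - ⟪F a - F c, a - b⟫ = ⟪F a - F c, b - x⟫ := by
      rw [← inner_sub_right]
      congr 1
      abel
    linarith [hinner, e1, e2, e3]
  -- three-point identity
  have h3 : ⟪a - b, b - x⟫ = (‖a - x‖ ^ 2 - ‖b - x‖ ^ 2 - ‖a - b‖ ^ 2) / 2 := by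
    have : ‖(a - b) + (b - x)‖ ^ 2
        = ‖a - b‖ ^ 2 + 2 * ⟪a - b, b - x⟫ + ‖b - x‖ ^ 2 := norm_add_sq_real _ _
    have hax : (a - b) + (b - x) = a - x := by abel
    rw [hax] at this
    linarith
  -- Cauchy–Schwarz + Lipschitz bound
  have hC : ⟪F a - F c, a - b⟫ ≤ L / 2 * ‖a - c‖ ^ 2 + L / 2 * ‖a - b‖ ^ 2 := by
    have h1 : ⟪F a - F c, a - b⟫ ≤ ‖F a - F c‖ * ‖a - b‖ := real_inner_le_norm _ _
    have h2 : ‖F a - F c‖ ≤ L * ‖a - c‖ := hF a c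
    nlinarith [norm_nonneg (a - b), norm_nonneg (a - c), norm_nonneg (F a - F c),
      sq_nonneg (‖a - c‖ - ‖a - b‖), hL.le]
  -- step size
  have h2L : 2 * L ≤ 1 / η := by
    rw [le_div_iff₀ hη]
    calc 2 * L * η ≤ 2 * L * (1 / (2 * L)) := by
          have : (0:ℝ) < 2 * L := by linarith
          nlinarith
      _ = 1 := by field_simp
  have hηinv : η⁻¹ = 1 / η := (one_div η).symm
  have hxa : ‖x - a‖ = ‖a - x‖ := norm_sub_rev _ _
  have hxb : ‖x - b‖ = ‖b - x‖ := norm_sub_rev _ _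
  have hba : ‖b - a‖ = ‖a - b‖ := norm_sub_rev _ _
  rw [hkey, hxa, hxb, hba, h3, hηinv]
  have hnn : 0 ≤ ‖a - b‖ ^ 2 := sq_nonneg _
  have hη2 : 0 < 1 / η := by positivity
  have hhalf : 1 / (2 * η) = (1 / η) / 2 := by field_simp
  rw [hhalf]
  nlinarith [hC, mul_le_mul_of_nonneg_right h2L hnn]
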